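/- arXiv:1111.2938 — 4 statements merged into one kernel-verified Lean document; each statement's English description precedes it below -/
import Mathlib

section
/- Let V be a finite-dimensional real inner product space and let H : V → V be a self-adjoint positive semidefinite linear operator all of whose eigenvalues are at most 3 (equivalently, 0 ≤ ⟨x, Hx⟩ ≤ 3‖x‖² for all x ∈ V). Let g ∈ V, let h : ℕ → V, and let u : ℕ → V satisfy the inhomogeneous discrete wave equation u(t+1) − 2u(t) + u(t−1) = −H u(t) + h(t) for all t ≥ 1, with u(0) = 0 and u(1) = g. Then for every t ∈ ℕ, the energy E_H(u(t)) := ⟨u(t), H u(t)⟩ satisfies E_H(u(t))^{1/2} ≤ 2(‖g‖ + Σ_{k=1}^{t} ‖h(k)‖). -/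
open scoped RealInnerProductSpace

section DiscreteWaveAux
variable {V : Type*} [NormedAddCommGroup V] [InnerProductSpace ℝ V]

private lemma aux_cs_sq (A : V →ₗ[ℝ] V)
    (hs : ∀ x y : V, ⟪A x, y⟫ = ⟪x, A y⟫)
    (hp : ∀ x : V, 0 ≤ ⟪x, A x⟫) (x y : V) :
    ⟪x, A y⟫ ^ 2 ≤ ⟪x, A x⟫ * ⟪y, A y⟫ := by
  have hxy : ⟪y, A x⟫ = ⟪x, A y⟫ := by
    rw [← hs x y, real_inner_comm]
  have key : ∀ r : ℝ, 0 ≤ ⟪y, A y⟫ * (r * r) + 2 * ⟪x, A y⟫ * r + ⟪x, A x⟫ := by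
    intro r
    have h0 := hp (x + r • y)
    have hexp : ⟪x + r • y, A (x + r • y)⟫
        = ⟪y, A y⟫ * (r * r) + 2 * ⟪x, A y⟫ * r + ⟪x, A x⟫ := by
      simp only [map_add, map_smul, inner_add_left, inner_add_right,
        real_inner_smul_left, real_inner_smul_right, hxy]
      ring
    rw [hexp] at h0; linarith
  have hd := discrim_le_zero (a := ⟪y, A y⟫) (b := 2 * ⟪x, A y⟫) (c := ⟪x, A x⟫) key
  rw [discrim] at hd
  nlinarith [hd]

private lemma aux_cs (A : V →ₗ[ℝ] V)
    (hs : ∀ x y : V, ⟪A x, y⟫ = ⟪x, A y⟫)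
    (hp : ∀ x : V, 0 ≤ ⟪x, A x⟫) (x y : V) :
    |⟪x, A y⟫| ≤ Real.sqrt ⟪x, A x⟫ * Real.sqrt ⟪y, A y⟫ := by
  have h := aux_cs_sq A hs hp x y
  rw [← Real.sqrt_sq_eq_abs, ← Real.sqrt_mul (hp x)]
  exact Real.sqrt_le_sqrt h

private lemma aux_sum (a b c d : ℝ) (ha : 0 ≤ a) (hb : 0 ≤ b) (hc : 0 ≤ c) (hd : 0 ≤ d) :
    a * c + b * d ≤ Real.sqrt (a^2 + b^2) * Real.sqrt (c^2 + d^2) := by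
  have h1 : (a*c+b*d)^2 ≤ (a^2+b^2)*(c^2+d^2) := by nlinarith [sq_nonneg (a*d - b*c)]
  calc a*c+b*d = Real.sqrt ((a*c+b*d)^2) := (Real.sqrt_sq (by positivity)).symm
    _ ≤ Real.sqrt ((a^2+b^2)*(c^2+d^2)) := Real.sqrt_le_sqrt h1
    _ = Real.sqrt (a^2+b^2) * Real.sqrt (c^2+d^2) := Real.sqrt_mul (by positivity) _

private lemma aux_diff (H : V →ₗ[ℝ] V) (hsym : ∀ x y : V, ⟪H x, y⟫ = ⟪x, H y⟫)
    (x y c : V) :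
    (⟪((2:ℝ) • x - y - H x + c) - x, ((2:ℝ) • x - y - H x + c) - x⟫
      - 4⁻¹ * ⟪((2:ℝ) • x - y - H x + c) - x, H (((2:ℝ) • x - y - H x + c) - x)⟫
      + 4⁻¹ * ⟪((2:ℝ) • x - y - H x + c) + x, H (((2:ℝ) • x - y - H x + c) + x)⟫)
      - (⟪x - y, x - y⟫ - 4⁻¹ * ⟪x - y, H (x - y)⟫ + 4⁻¹ * ⟪x + y, H (x + y)⟫)
      = ⟪c, ((2:ℝ) • x - y - H x + c) - y⟫ := by
  have hB : ∀ a b : V, ⟪a, H b⟫ = ⟪b, H a⟫ := fun a b => by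
    rw [← hsym a b]; exact real_inner_comm _ _
  simp only [map_add, map_sub, map_smul, inner_add_left, inner_add_right,
    inner_sub_left, inner_sub_right, real_inner_smul_left, real_inner_smul_right]
  ring_nf
  linarith [hB x y, hB x c, hB y c, hB x (H x), hB y (H x), hB c (H x), hB x x,
    real_inner_comm x y, real_inner_comm x c, real_inner_comm y c,
    real_inner_comm x (H x), real_inner_comm y (H x), real_inner_comm c (H x),
    hsym (H x) x, hsym (H x) y, hsym (H x) c, hsym x x, hsym x y, hsym x c,
    hsym y x, hsym y c, hsym c x, hsym c y, real_inner_comm (H x) (H x)]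

private lemma aux_final (H : V →ₗ[ℝ] V) (hsym : ∀ x y : V, ⟪H x, y⟫ = ⟪x, H y⟫)
    (hpos : ∀ x : V, 0 ≤ ⟪x, H x⟫)
    (hbound : ∀ x : V, ⟪x, H x⟫ ≤ 3 * ‖x‖ ^ 2) (x y : V) :
    ⟪x, H x⟫ ≤ 4 * ((⟪x - y, x - y⟫ - 4⁻¹ * ⟪x - y, H (x - y)⟫)
      + 4⁻¹ * ⟪x + y, H (x + y)⟫) := by
  have hB : ∀ a b : V, ⟪a, H b⟫ = ⟪b, H a⟫ := fun a b => by
    rw [← hsym a b]; exact real_inner_comm _ _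
  have hb3 : ⟪x - y, H (x - y)⟫ ≤ 3 * ⟪x - y, x - y⟫ := by
    have := hbound (x - y)
    rwa [← real_inner_self_eq_norm_sq] at this
  have hexp : 4 * ⟪x, H x⟫ = ⟪x + y, H (x + y)⟫ + 2 * ⟪x + y, H (x - y)⟫
      + ⟪x - y, H (x - y)⟫ := by
    simp only [map_add, map_sub, inner_add_left, inner_add_right,
      inner_sub_left, inner_sub_right]
    linarith [hB x y, real_inner_comm x y]
  have hP : ⟪x + y, H (x - y)⟫ ≤ Real.sqrt ⟪x + y, H (x + y)⟫ * Real.sqrt ⟪x - y, H (x - y)⟫ :=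
    le_trans (le_abs_self _) (aux_cs H hsym hpos (x + y) (x - y))
  have e1 : (Real.sqrt ⟪x + y, H (x + y)⟫) ^ 2 = ⟪x + y, H (x + y)⟫ := Real.sq_sqrt (hpos _)
  have e2 : (Real.sqrt ⟪x - y, H (x - y)⟫) ^ 2 = ⟪x - y, H (x - y)⟫ := Real.sq_sqrt (hpos _)
  nlinarith [hP, e1, e2, hb3, hexp,
    sq_nonneg (3 * Real.sqrt ⟪x + y, H (x + y)⟫ - Real.sqrt ⟪x - y, H (x - y)⟫)]

end DiscreteWaveAux

set_option maxHeartbeats 1000000 in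
/-- Energy bound for the inhomogeneous discrete wave equation on a
finite-dimensional real inner product space. -/
theorem discrete_wave_energy_bound
    {V : Type*} [NormedAddCommGroup V] [InnerProductSpace ℝ V]
    [FiniteDimensional ℝ V]
    (H : V →ₗ[ℝ] V)
    (hsym : ∀ x y : V, ⟪H x, y⟫ = ⟪x, H y⟫)
    (hpos : ∀ x : V, 0 ≤ ⟪x, H x⟫)
    (hbound : ∀ x : V, ⟪x, H x⟫ ≤ 3 * ‖x‖ ^ 2)
    (g : V) (h : ℕ → V) (u : ℕ → V)
    (hrec : ∀ t : ℕ, 1 ≤ t →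
      u (t + 1) - (2 : ℝ) • u t + u (t - 1) = -(H (u t)) + h t)
    (h0 : u 0 = 0) (h1 : u 1 = g) :
    ∀ t : ℕ, Real.sqrt ⟪u t, H (u t)⟫ ≤
      2 * (‖g‖ + ∑ k ∈ Finset.Icc 1 t, ‖h k‖) := by
  classical
  have hB : ∀ a b : V, ⟪a, H b⟫ = ⟪b, H a⟫ := fun a b => by
    rw [← hsym a b]; exact real_inner_comm _ _
  -- the modified operator A = id - (1/4) H, as a quadratic form
  set A : V →ₗ[ℝ] V := LinearMap.id - (4⁻¹ : ℝ) • H with hAdef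
  have hAapp : ∀ x : V, A x = x - (4⁻¹ : ℝ) • H x := by
    intro x; simp [hAdef]
  have hAq : ∀ x : V, ⟪x, A x⟫ = ⟪x, x⟫ - 4⁻¹ * ⟪x, H x⟫ := by
    intro x
    rw [hAapp, inner_sub_right, real_inner_smul_right]
  have hAsym : ∀ x y : V, ⟪A x, y⟫ = ⟪x, A y⟫ := by
    intro x y
    rw [hAapp, hAapp, inner_sub_left, inner_sub_right, real_inner_smul_left,
      real_inner_smul_right, hsym]
  have hApos : ∀ x : V, 0 ≤ ⟪x, A x⟫ := by
    intro x
    rw [hAq, real_inner_self_eq_norm_sq]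
    nlinarith [hbound x, hpos x, sq_nonneg ‖x‖]
  -- the discrete energy
  set E : ℕ → ℝ := fun n => ⟪u (n+1) - u n, A (u (n+1) - u n)⟫
      + 4⁻¹ * ⟪u (n+1) + u n, H (u (n+1) + u n)⟫ with hEdef
  have hEnonneg : ∀ n, 0 ≤ E n := by
    intro n
    exact add_nonneg (hApos _) (mul_nonneg (by norm_num) (hpos _))
  have hE0 : E 0 = ‖g‖ ^ 2 := by
    simp only [hEdef, h0, h1, add_zero, sub_zero, hAq]
    rw [real_inner_self_eq_norm_sq]
    ring
  -- right-hand side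
  set R : ℕ → ℝ := fun n => ‖g‖ + ∑ k ∈ Finset.Icc 1 n, ‖h k‖ with hRdef
  have hRnonneg : ∀ n, 0 ≤ R n := by
    intro n
    exact add_nonneg (norm_nonneg _) (Finset.sum_nonneg fun _ _ => norm_nonneg _)
  have hRsucc : ∀ n, R (n + 1) = R n + ‖h (n + 1)‖ := by
    intro n
    simp only [hRdef]
    rw [Finset.sum_Icc_succ_top (by omega : 1 ≤ n + 1)]
    ring
  -- the main induction: E n ≤ (R n)^2
  have hEbound : ∀ n, E n ≤ (R n) ^ 2 := by
    intro n
    induction n with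
    | zero =>
      rw [hE0]
      have hR0 : R 0 = ‖g‖ := by simp [hRdef]
      rw [hR0]
    | succ n ih =>
      set b : V := u (n+1) - u n with hbdef
      set s : V := u (n+1) + u n with hsdef
      set c : V := h (n+1) with hcdef
      -- recursion rearranged
      have hu2 : u (n + 1 + 1) = (2:ℝ) • u (n+1) - u n - H (u (n+1)) + c := by
        have hr := hrec (n + 1) (by omega)
        rw [Nat.add_sub_cancel] at hr
        have e : u (n + 1 + 1) = -(H (u (n+1))) + h (n+1) + (2:ℝ) • u (n+1) - u n := by
          rw [← hr]; abel
        rw [e, hcdef]; abel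
      -- energy difference identity
      have hdiff : E (n+1) = E n + ⟪c, u (n+1+1) - u n⟫ := by
        have key := aux_diff H hsym (u (n+1)) (u n) c
        rw [← hu2] at key
        simp only [hEdef]
        rw [hAq, hAq]
        linarith [key]
      -- the inner product term, split
      have hd : u (n+1+1) - u n = (2:ℝ) • A b - (2⁻¹:ℝ) • H s + c := by
        rw [hu2, hAapp, hbdef, hsdef]
        simp only [map_sub, map_add, map_smul, smul_sub, smul_add]
        module
      have hsplit : ⟪c, u (n+1+1) - u n⟫
          = 2 * ⟪c, A b⟫ - 2⁻¹ * ⟪c, H s⟫ + ‖c‖ ^ 2 := by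
        rw [hd, inner_add_right, inner_sub_right, real_inner_smul_right,
          real_inner_smul_right, real_inner_self_eq_norm_sq]
      -- Cauchy-Schwarz bounds
      have h1 : ⟪c, A b⟫ ≤ Real.sqrt ⟪c, A c⟫ * Real.sqrt ⟪b, A b⟫ :=
        le_trans (le_abs_self _) (aux_cs A hAsym hApos c b)
      have h2 : -⟪c, H s⟫ ≤ Real.sqrt ⟪c, H c⟫ * Real.sqrt ⟪s, H s⟫ := by
        have habs := aux_cs H hsym hpos c s
        linarith [neg_le_abs ⟪c, H s⟫]
      have h3 := aux_sum (Real.sqrt ⟪c, A c⟫) (Real.sqrt ⟪c, H c⟫ / 2)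
        (Real.sqrt ⟪b, A b⟫) (Real.sqrt ⟪s, H s⟫ / 2)
        (Real.sqrt_nonneg _) (by positivity) (Real.sqrt_nonneg _) (by positivity)
      have ec : (Real.sqrt ⟪c, A c⟫) ^ 2 = ⟪c, A c⟫ := Real.sq_sqrt (hApos c)
      have ecH : (Real.sqrt ⟪c, H c⟫) ^ 2 = ⟪c, H c⟫ := Real.sq_sqrt (hpos c)
      have eb : (Real.sqrt ⟪b, A b⟫) ^ 2 = ⟪b, A b⟫ := Real.sq_sqrt (hApos b)
      have esH : (Real.sqrt ⟪s, H s⟫) ^ 2 = ⟪s, H s⟫ := Real.sq_sqrt (hpos s)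
      have hnormc : Real.sqrt ((Real.sqrt ⟪c, A c⟫)^2 + (Real.sqrt ⟪c, H c⟫ / 2)^2) = ‖c‖ := by
        rw [div_pow, ec, ecH]
        have e : ⟪c, A c⟫ + ⟪c, H c⟫ / 2 ^ 2 = ‖c‖ ^ 2 := by
          rw [hAq, real_inner_self_eq_norm_sq]; ring
        rw [e, Real.sqrt_sq (norm_nonneg c)]
      have hEn : Real.sqrt ((Real.sqrt ⟪b, A b⟫)^2 + (Real.sqrt ⟪s, H s⟫ / 2)^2)
          = Real.sqrt (E n) := by
        rw [div_pow, eb, esH]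
        congr 1
        simp only [hEdef, ← hbdef, ← hsdef]
        ring
      rw [hnormc, hEn] at h3
      -- assemble the step inequality
      have hstep : E (n+1) ≤ (Real.sqrt (E n) + ‖c‖) ^ 2 := by
        have hEval : E n = (Real.sqrt (E n)) ^ 2 := (Real.sq_sqrt (hEnonneg n)).symm
        rw [hdiff, hsplit]
        clear_value A E R b s c
        nlinarith [h1, h2, h3, hEval]
      -- conclude
      have hsq : Real.sqrt (E n) ≤ R n := by
        have hmn := Real.sqrt_le_sqrt ih
        rwa [Real.sqrt_sq (hRnonneg n)] at hmn
      calc E (n+1) ≤ (Real.sqrt (E n) + ‖c‖) ^ 2 := hstep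
        _ ≤ (R n + ‖c‖) ^ 2 := by
            clear_value A E R b s c
            nlinarith [hsq, norm_nonneg c, Real.sqrt_nonneg (E n), hRnonneg n]
        _ = (R (n+1)) ^ 2 := by rw [hRsucc n, hcdef]
  -- final assembly
  intro t
  rcases t with _ | n
  · rw [h0]
    simp only [map_zero, inner_zero_left, Real.sqrt_zero]
    positivity
  · have hfin : ⟪u (n+1), H (u (n+1))⟫ ≤ 4 * E n := by
      have key := aux_final H hsym hpos hbound (u (n+1)) (u n)
      simp only [hEdef]
      rw [hAq]
      linarith [key]
    have h4 : Real.sqrt ⟪u (n+1), H (u (n+1))⟫ ≤ 2 * Real.sqrt (E n) := by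
      have hs1 : Real.sqrt ⟪u (n+1), H (u (n+1))⟫ ≤ Real.sqrt (4 * E n) :=
        Real.sqrt_le_sqrt hfin
      rwa [show (4:ℝ) * E n = 2^2 * E n by norm_num, Real.sqrt_mul (by positivity),
        Real.sqrt_sq (by norm_num : (0:ℝ) ≤ 2)] at hs1
    have hsq : Real.sqrt (E n) ≤ R n := by
      have hmn := Real.sqrt_le_sqrt (hEbound n)
      rwa [Real.sqrt_sq (hRnonneg n)] at hmn
    have hmono : R n ≤ R (n+1) := by
      rw [hRsucc n]; linarith [norm_nonneg (h (n+1))]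
    calc Real.sqrt ⟪u (n+1), H (u (n+1))⟫ ≤ 2 * Real.sqrt (E n) := h4
      _ ≤ 2 * R n := by linarith
      _ ≤ 2 * R (n+1) := by linarith
      _ = 2 * (‖g‖ + ∑ k ∈ Finset.Icc 1 (n+1), ‖h k‖) := by rw [hRdef]
end

section
/- Let V be a finite-dimensional real inner product space and let H : V → V be a self-adjoint positive semidefinite linear operator all of whose eigenvalues are at most 3 (equivalently, 0 ≤ ⟨x, Hx⟩ ≤ 3‖x‖² for all x ∈ V). Let g ∈ V and let u : ℕ → V satisfy the homogeneous discrete wave equation u(t+1) − 2u(t) + u(t−1) = −H u(t) for all t ≥ 1, with u(0) = 0 and u(1) = g. Then for every t ∈ ℕ, the energy satisfies E_H(u(t)) := ⟨u(t), H u(t)⟩ ≤ 4‖g‖². -/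
open scoped RealInnerProductSpace

/-- Difference of consecutive discrete energies as a single inner product. -/
lemma wave_aux_diff_id {V : Type*} [NormedAddCommGroup V] [InnerProductSpace ℝ V]
    (a b c h : V) :
    (‖a‖ ^ 2 + ‖b‖ ^ 2 - 2 * ⟪a, b⟫ + ⟪a, h⟫)
      - (‖b‖ ^ 2 + ‖c‖ ^ 2 - 2 * ⟪b, c⟫ + ⟪c, h⟫)
      = ⟪a - c, a - (2 : ℝ) • b + c + h⟫ := by
  simp only [inner_sub_left, inner_add_right, inner_sub_right, real_inner_smul_right,
    real_inner_self_eq_norm_sq]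
  rw [real_inner_comm c a, real_inner_comm c b]
  ring

/-- Sum-of-squares style identity for the energy bound. -/
lemma wave_aux_sos_id {V : Type*} [NormedAddCommGroup V] [InnerProductSpace ℝ V]
    (a b h : V) :
    4 * (‖a‖ ^ 2 + ‖b‖ ^ 2 - 2 * ⟪a, b⟫ + ⟪a, h⟫) - ⟪b, h⟫
      = 4 * ‖a - b + (1 / 2 : ℝ) • h‖ ^ 2 + (3 * ⟪b, h⟫ - ‖h‖ ^ 2) := by
  rw [← real_inner_self_eq_norm_sq (a - b + (1 / 2 : ℝ) • h)]
  simp only [inner_sub_left, inner_add_right, inner_sub_right, inner_add_left,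
    real_inner_smul_right, real_inner_smul_left, real_inner_self_eq_norm_sq]
  rw [real_inner_comm b a, real_inner_comm h a, real_inner_comm h b]
  have hs : ‖(1 / 2 : ℝ) • h‖ ^ 2 = 1 / 4 * ‖h‖ ^ 2 := by
    rw [norm_smul]; norm_num; ring
  rw [hs]; ring

/-- Energy bound for the homogeneous discrete wave equation on a
finite-dimensional real inner product space. -/
theorem discrete_wave_energy_bound_homogeneous
    {V : Type*} [NormedAddCommGroup V] [InnerProductSpace ℝ V]
    [FiniteDimensional ℝ V]
    (H : V →ₗ[ℝ] V)
    (hsym : ∀ x y : V, ⟪H x, y⟫ = ⟪x, H y⟫)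
    (hpos : ∀ x : V, 0 ≤ ⟪x, H x⟫)
    (hbound : ∀ x : V, ⟪x, H x⟫ ≤ 3 * ‖x‖ ^ 2)
    (g : V) (u : ℕ → V)
    (hrec : ∀ t : ℕ, 1 ≤ t →
      u (t + 1) - (2 : ℝ) • u t + u (t - 1) = -(H (u t)))
    (h0 : u 0 = 0) (h1 : u 1 = g) :
    ∀ t : ℕ, ⟪u t, H (u t)⟫ ≤ 4 * ‖g‖ ^ 2 := by
  -- Cauchy–Schwarz for the positive semidefinite bilinear form of H
  have cs : ∀ x y : V, ⟪x, H y⟫ ^ 2 ≤ ⟪x, H x⟫ * ⟪y, H y⟫ := by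
    intro x y
    have hyx : ⟪y, H x⟫ = ⟪x, H y⟫ := by rw [real_inner_comm, hsym]
    have h := discrim_le_zero (a := ⟪y, H y⟫) (b := 2 * ⟪x, H y⟫) (c := ⟪x, H x⟫) ?_
    · rw [discrim] at h; nlinarith [h]
    · intro t
      have hp := hpos (x + t • y)
      have e : ⟪x + t • y, H (x + t • y)⟫
          = ⟪x, H x⟫ + 2 * ⟪x, H y⟫ * t + ⟪y, H y⟫ * t ^ 2 := by
        simp only [map_add, map_smul, inner_add_left, inner_add_right,
          real_inner_smul_left, real_inner_smul_right]
        rw [hyx]; ring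
      rw [e] at hp
      linarith [hp]
  -- key consequence: ‖H b‖² ≤ 3 ⟪b, H b⟫
  have hB : ∀ b : V, ‖H b‖ ^ 2 ≤ 3 * ⟪b, H b⟫ := by
    intro b
    have h1' := cs (H b) b
    rw [real_inner_self_eq_norm_sq] at h1'
    have h2 := hbound (H b)
    have h3 := hpos b
    have h4 := hpos (H b)
    nlinarith [sq_nonneg (‖H b‖), sq_nonneg (‖H b‖ ^ 2 - 3 * ⟪b, H b⟫)]
  -- the conserved energy
  set F : ℕ → ℝ := fun t =>
    ‖u (t + 1)‖ ^ 2 + ‖u t‖ ^ 2 - 2 * ⟪u (t + 1), u t⟫ + ⟪u (t + 1), H (u t)⟫ with hFdef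
  have hF : ∀ t : ℕ, F t = ‖g‖ ^ 2 := by
    intro t
    induction t with
    | zero => simp [hFdef, h0, h1]
    | succ n ih =>
      have hr := hrec (n + 1) (by omega)
      simp only [Nat.add_sub_cancel] at hr
      have hz : u (n + 1 + 1) - (2 : ℝ) • u (n + 1) + u n + H (u (n + 1)) = 0 := by
        rw [hr]; simp
      have hsymm : ⟪u (n + 1), H (u n)⟫ = ⟪u n, H (u (n + 1))⟫ := by
        rw [real_inner_comm, hsym]
      have hd := wave_aux_diff_id (u (n + 1 + 1)) (u (n + 1)) (u n) (H (u (n + 1)))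
      rw [hz, inner_zero_right] at hd
      have : F (n + 1) = F n := by
        simp only [hFdef]
        rw [hsymm] at *
        linarith [hd]
      rw [this, ih]
  -- conclude
  intro t
  have hFt := hF t
  have hsos := wave_aux_sos_id (u (t + 1)) (u t) (H (u t))
  have hnn : 0 ≤ 4 * ‖u (t + 1) - u t + (1 / 2 : ℝ) • (H (u t))‖ ^ 2 := by positivity
  have hb := hB (u t)
  simp only [hFdef] at hFt
  nlinarith [hsos, hFt, hnn, hb]
end

section
/- For every real α with −1 < α < 0 there exists a constant C_α > 0, depending only on α, such that for all real t > 0 and all real γ with 0 < γ ≤ 1/(4t), and for every complex number z with Re(z) = γ, one has |1/(z⁻¹ + t)|^α · Re(1/(z⁻¹ + t)) ≥ C_α · t^{−α/2} · γ^{1+α/2}. -/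
open Real

private lemma key_ineq (α t γ r a b : ℝ) (hα1 : -1 < α) (hα2 : α < 0) (ht : 0 < t)
    (hγ : 0 < γ) (hγt : γ ≤ 1 / (4 * t)) (hr : 0 < r) (hb : 0 < b)
    (ha1 : t ≤ a) (ha2 : γ / r ^ 2 ≤ a) (hb2 : b ≤ 1 / r + t) :
    (1/4) * t ^ (-(α / 2)) * γ ^ (1 + α / 2) ≤ a * b ^ (-(α + 2)) := by
  have ha : 0 < a := lt_of_lt_of_le ht ha1
  have htγ : t * γ ≤ 1 / 4 := by
    have := (le_div_iff₀ (show (0:ℝ) < 4*t by positivity)).mp hγt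
    nlinarith
  by_cases hcase : r ^ 2 ≤ γ / t
  · -- Case A : r² ≤ γ/t
    have hr2 : r ^ 2 * t ≤ γ := by
      rw [le_div_iff₀ ht] at hcase; linarith
    have hrt : r * t ≤ 1 / 2 := by nlinarith [sq_nonneg (r * t - 1/2)]
    have ht' : t ≤ 1 / (2 * r) := by
      rw [le_div_iff₀ (by positivity)]; linarith
    have hbc : b ≤ (3/2) * r⁻¹ := by
      have : (1:ℝ) / r + 1 / (2 * r) = (3/2) * r⁻¹ := by field_simp; ring
      linarith
    have h2 : ((3/2) * r⁻¹) ^ (-(α + 2)) ≤ b ^ (-(α + 2)) :=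
      Real.rpow_le_rpow_of_nonpos hb hbc (by linarith)
    have h3 : γ / r ^ 2 * ((3/2) * r⁻¹) ^ (-(α + 2)) ≤ a * b ^ (-(α + 2)) :=
      mul_le_mul ha2 h2 (by positivity) ha.le
    refine le_trans ?_ h3
    have hexp : ((3/2) * r⁻¹ : ℝ) ^ (-(α + 2)) = (3/2 : ℝ) ^ (-(α + 2)) * r ^ (α + 2) := by
      rw [Real.mul_rpow (by norm_num) (by positivity),
        ← Real.rpow_neg_one r, ← Real.rpow_mul hr.le]
      norm_num
    have hrsplit : r ^ (α + 2) = r ^ α * r ^ 2 := by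
      rw [Real.rpow_add hr, Real.rpow_two]
    have h32 : (1/4 : ℝ) ≤ (3/2 : ℝ) ^ (-(α + 2)) := by
      rw [Real.rpow_neg (by norm_num)]
      have h1 : ((3:ℝ)/2) ^ (α + 2) ≤ (3/2 : ℝ) ^ (2:ℝ) :=
        Real.rpow_le_rpow_of_exponent_le (by norm_num) (by linarith)
      rw [Real.rpow_two] at h1
      have hpos : (0:ℝ) < (3/2:ℝ) ^ (α+2) := Real.rpow_pos_of_pos (by norm_num) _
      rw [le_inv_comm₀ (by norm_num) hpos]
      nlinarith
    have hrle : r ≤ (γ / t) ^ ((1:ℝ)/2) := by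
      have h1 : ((r ^ 2 : ℝ)) ^ ((1:ℝ)/2) ≤ (γ / t) ^ ((1:ℝ)/2) :=
        Real.rpow_le_rpow (by positivity) hcase (by norm_num)
      rwa [← Real.rpow_two, ← Real.rpow_mul hr.le,
        show (2:ℝ) * (1/2) = 1 by norm_num, Real.rpow_one] at h1
    have hrα : γ ^ (α/2) * t ^ (-(α/2)) ≤ r ^ α := by
      have h1 : ((γ/t) ^ ((1:ℝ)/2)) ^ α ≤ r ^ α :=
        Real.rpow_le_rpow_of_nonpos hr hrle hα2.le
      rwa [← Real.rpow_mul (by positivity), show (1:ℝ)/2 * α = α/2 by ring,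
        Real.div_rpow hγ.le ht.le, div_eq_mul_inv, ← Real.rpow_neg ht.le] at h1
    have hγsplit : γ ^ (1 + α/2) = γ * γ ^ (α/2) := by
      rw [Real.rpow_add hγ, Real.rpow_one]
    have heq : γ / r ^ 2 * ((3/2 : ℝ) ^ (-(α + 2)) * (r ^ α * r ^ 2))
        = (3/2 : ℝ) ^ (-(α + 2)) * (γ * r ^ α) := by
      field_simp
    calc (1/4) * t ^ (-(α / 2)) * γ ^ (1 + α / 2)
        = (1/4) * (γ * (γ ^ (α/2) * t ^ (-(α/2)))) := by rw [hγsplit]; ring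
      _ ≤ (3/2 : ℝ) ^ (-(α + 2)) * (γ * r ^ α) := by
          apply mul_le_mul h32 (mul_le_mul_of_nonneg_left hrα hγ.le) (by positivity)
          positivity
      _ = γ / r ^ 2 * ((3/2) * r⁻¹) ^ (-(α + 2)) := by rw [hexp, hrsplit, heq]
  · -- Case B : γ/t < r²
    push_neg at hcase
    set m : ℝ := (t / γ) ^ ((1:ℝ)/2) with hm
    have hmpos : 0 < m := Real.rpow_pos_of_pos (by positivity) _
    have h1r : 1 / r ≤ m := by
      have hkey : (1/r) ^ 2 ≤ t / γ := by
        rw [div_pow, one_pow, div_le_div_iff₀ (by positivity) hγ]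
        nlinarith [div_lt_iff₀ ht |>.mp hcase]
      have h1 : (((1/r) ^ 2 : ℝ)) ^ ((1:ℝ)/2) ≤ (t / γ) ^ ((1:ℝ)/2) :=
        Real.rpow_le_rpow (by positivity) hkey (by norm_num)
      rwa [← Real.rpow_two, ← Real.rpow_mul (by positivity),
        show (2:ℝ) * (1/2) = 1 by norm_num, Real.rpow_one] at h1
    have htm : t ≤ m := by
      have hkey : t ^ 2 ≤ t / γ := by
        rw [le_div_iff₀ hγ]
        nlinarith
      have h1 : ((t ^ 2 : ℝ)) ^ ((1:ℝ)/2) ≤ (t / γ) ^ ((1:ℝ)/2) :=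
        Real.rpow_le_rpow (by positivity) hkey (by norm_num)
      rwa [← Real.rpow_two, ← Real.rpow_mul ht.le,
        show (2:ℝ) * (1/2) = 1 by norm_num, Real.rpow_one] at h1
    have hbm : b ≤ 2 * m := by linarith
    have h2 : (2 * m) ^ (-(α + 2)) ≤ b ^ (-(α + 2)) :=
      Real.rpow_le_rpow_of_nonpos hb hbm (by linarith)
    have h3 : t * (2 * m) ^ (-(α + 2)) ≤ a * b ^ (-(α + 2)) :=
      mul_le_mul ha1 h2 (by positivity) ha.le
    refine le_trans ?_ h3
    have hexp : (2 * m : ℝ) ^ (-(α + 2)) = (2:ℝ) ^ (-(α + 2)) * (t ^ (-((α+2)/2)) * γ ^ ((α+2)/2)) := by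
      rw [Real.mul_rpow (by norm_num) hmpos.le, hm, ← Real.rpow_mul (by positivity),
        show (1:ℝ)/2 * -(α + 2) = -((α+2)/2) by ring,
        Real.div_rpow ht.le hγ.le, Real.rpow_neg hγ.le, div_inv_eq_mul]
    have h2b : (1/4 : ℝ) ≤ (2:ℝ) ^ (-(α + 2)) := by
      rw [Real.rpow_neg (by norm_num)]
      have h1 : ((2:ℝ)) ^ (α + 2) ≤ (2 : ℝ) ^ (2:ℝ) :=
        Real.rpow_le_rpow_of_exponent_le (by norm_num) (by linarith)
      rw [Real.rpow_two] at h1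
      have hpos : (0:ℝ) < (2:ℝ) ^ (α+2) := Real.rpow_pos_of_pos (by norm_num) _
      rw [le_inv_comm₀ (by norm_num) hpos]
      nlinarith
    have ht1 : t * t ^ (-((α+2)/2)) = t ^ (-(α/2)) := by
      nth_rewrite 1 [← Real.rpow_one t]
      rw [← Real.rpow_add ht]
      congr 1; ring
    have hγ1 : γ ^ ((α+2)/2) = γ ^ (1 + α/2) := by
      congr 1; ring
    calc (1/4) * t ^ (-(α / 2)) * γ ^ (1 + α / 2)
        = (1/4) * (t ^ (-(α/2)) * γ ^ (1 + α/2)) := by ring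
      _ ≤ (2:ℝ) ^ (-(α + 2)) * (t ^ (-(α/2)) * γ ^ (1 + α/2)) := by
          apply mul_le_mul_of_nonneg_right h2b; positivity
      _ = t * ((2:ℝ) ^ (-(α + 2)) * (t ^ (-((α+2)/2)) * γ ^ ((α+2)/2))) := by
          rw [hγ1, ← ht1]; ring
      _ = t * (2 * m) ^ (-(α + 2)) := by rw [hexp]

/-- Lower bound over the vertical line `Re z = γ` for the quantity
`|1/(z⁻¹ + t)|^α · Re (1/(z⁻¹ + t))`. -/
theorem min_exponent_bound (α : ℝ) (hα1 : -1 < α) (hα2 : α < 0) :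
    ∃ C : ℝ, 0 < C ∧
      ∀ t : ℝ, 0 < t → ∀ γ : ℝ, 0 < γ → γ ≤ 1 / (4 * t) →
        ∀ z : ℂ, z.re = γ →
          C * t ^ (-(α / 2)) * γ ^ (1 + α / 2) ≤
            ‖1 / (z⁻¹ + (t : ℂ))‖ ^ α * (1 / (z⁻¹ + (t : ℂ))).re := by
  refine ⟨1/4, by norm_num, fun t ht γ hγ hγt z hz => ?_⟩
  have hz0 : z ≠ 0 := by
    intro h; rw [h] at hz; simp at hz; linarith
  set u : ℂ := z⁻¹ + (t : ℂ) with hu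
  have hns : 0 < Complex.normSq z := Complex.normSq_pos.mpr hz0
  have hure : u.re = γ / Complex.normSq z + t := by
    rw [hu, Complex.add_re, Complex.inv_re, hz, Complex.ofReal_re]
  have hupos : 0 < u.re := by rw [hure]; positivity
  have hu0 : u ≠ 0 := fun h => by rw [h] at hupos; simp at hupos
  set b : ℝ := ‖u‖ with hb
  have hbpos : 0 < b := norm_pos_iff.mpr hu0
  set r : ℝ := ‖z‖ with hr
  have hrpos : 0 < r := norm_pos_iff.mpr hz0
  have hb2 : b ≤ 1 / r + t := by
    calc b ≤ ‖z⁻¹‖ + ‖(t : ℂ)‖ := norm_add_le _ _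
      _ = 1 / r + t := by
          rw [norm_inv, Complex.norm_real, Real.norm_eq_abs, abs_of_pos ht, one_div]
  have hr2 : r ^ 2 = Complex.normSq z := Complex.sq_norm z
  have ha2 : γ / r ^ 2 ≤ u.re := by rw [hure, hr2]; nlinarith [div_pos hγ hns]
  have ha1 : t ≤ u.re := by
    rw [hure]; nlinarith [div_pos hγ hns]
  have hsplit : b ^ (-(α+2)) = b ^ (-α) * (b^2)⁻¹ := by
    rw [show -(α+2) = -α + (-2:ℝ) by ring, Real.rpow_add hbpos,
      Real.rpow_neg hbpos.le (2:ℝ), Real.rpow_two]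
  have hrw : ‖1 / u‖ ^ α * (1 / u).re = u.re * b ^ (-(α + 2)) := by
    rw [one_div, norm_inv, Complex.inv_re, ← Complex.sq_norm, ← hb,
      show ((‖u‖)⁻¹ : ℝ) ^ α = b ^ (-α) from by
        rw [← hb, Real.inv_rpow hbpos.le, ← Real.rpow_neg hbpos.le],
      hsplit]
    ring
  rw [hrw]
  have := key_ineq α t γ r u.re b hα1 hα2 ht hγ hγt hrpos hbpos ha1 ha2 hb2
  linarith
end

section
/- Let s > 0 and λ ≥ 0 be real numbers. Then ∫_0^∞ t^{−1/2} cos(√(λt)) e^{−st} dt = √(π/s) · exp(−λ/(4s)), where the integral is a convergent improper Lebesgue integral over (0, ∞). -/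
open scoped Real

open MeasureTheory Set Complex in
private lemma laplace_aux_complex (s lam : ℝ) (hs : 0 < s) (hlam : 0 ≤ lam) :
    ∫ x : ℝ, Real.cos (Real.sqrt lam * x) * Real.exp (-s * x ^ 2) =
      Real.sqrt (π / s) * Real.exp (-lam / (4 * s)) := by
  set a : ℝ := Real.sqrt lam with ha
  have hsre : 0 < (s : ℂ).re := by simpa using hs
  have h1 := fourierIntegral_gaussian (b := (s : ℂ)) hsre (a : ℂ)
  have h2 := fourierIntegral_gaussian (b := (s : ℂ)) hsre (-(a : ℂ))
  have hi : ∀ t : ℂ, Integrable fun x : ℝ => cexp (I * t * x) * cexp (-(s:ℂ) * x ^ 2) := by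
    intro t
    have := integrable_cexp_quadratic (b := (s:ℂ)) hsre (I * t) 0
    refine this.congr ?_
    filter_upwards with x
    rw [← Complex.exp_add]
    ring_nf
  have key : ∫ x : ℝ, ((2 : ℂ) * Complex.cos (a * x)) * cexp (-(s:ℂ) * x ^ 2) =
      2 * ((π / s : ℂ) ^ (1 / 2 : ℂ) * cexp (-(a:ℂ) ^ 2 / (4 * s))) := by
    have : ∀ x : ℝ, ((2 : ℂ) * Complex.cos (a * x)) * cexp (-(s:ℂ) * x ^ 2)
        = cexp (I * a * x) * cexp (-(s:ℂ) * x ^ 2)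
          + cexp (I * (-(a:ℂ)) * x) * cexp (-(s:ℂ) * x ^ 2) := by
      intro x
      rw [Complex.cos]
      ring_nf
    simp_rw [this]
    rw [integral_add (hi _) (hi _), h1, h2]
    ring_nf
  have hcos : ∀ x : ℝ, ((2 : ℂ) * Complex.cos (a * x)) * cexp (-(s:ℂ) * x ^ 2)
      = 2 * ((Real.cos (a * x) * Real.exp (-s * x ^ 2) : ℝ) : ℂ) := by
    intro x
    push_cast [Complex.ofReal_cos, Complex.ofReal_exp]
    ring_nf
  simp_rw [hcos] at key
  rw [MeasureTheory.integral_const_mul] at key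
  have key2 : (∫ x : ℝ, ((Real.cos (a * x) * Real.exp (-s * x ^ 2) : ℝ) : ℂ))
      = ((Real.sqrt (π / s) * Real.exp (-lam / (4 * s)) : ℝ) : ℂ) := by
    have h2ne : (2 : ℂ) ≠ 0 := two_ne_zero
    have keyv : (∫ x : ℝ, ((Real.cos (a * x) * Real.exp (-s * x ^ 2) : ℝ) : ℂ))
        = (π / s : ℂ) ^ (1 / 2 : ℂ) * cexp (-(a:ℂ) ^ 2 / (4 * s)) :=
      mul_left_cancel₀ h2ne key
    rw [keyv]
    have e1 : ((π : ℂ) / s) ^ (1 / 2 : ℂ) = ((Real.sqrt (π / s) : ℝ) : ℂ) := by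
      rw [Real.sqrt_eq_rpow, Complex.ofReal_cpow (div_nonneg Real.pi_pos.le hs.le)]
      push_cast
      ring_nf
    have e2 : (-(a:ℂ) ^ 2 / (4 * s)) = ((-lam / (4 * s) : ℝ) : ℂ) := by
      have : (a : ℝ) ^ 2 = lam := Real.sq_sqrt hlam
      push_cast [← this]
      ring_nf
    rw [e1, e2, ← Complex.ofReal_exp, ← Complex.ofReal_mul]
  have key3 : (((∫ x : ℝ, Real.cos (a * x) * Real.exp (-s * x ^ 2)) : ℝ) : ℂ)
      = ((Real.sqrt (π / s) * Real.exp (-lam / (4 * s)) : ℝ) : ℂ) :=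
    (integral_ofReal (𝕜 := ℂ)).symm.trans key2
  exact_mod_cast key3

/-- Laplace transform identity:
`∫_0^∞ t^{-1/2} cos (√(λt)) e^{-st} dt = √(π/s) exp (-λ/(4s))`. -/
theorem laplace_transform_cos_sqrt (s lam : ℝ) (hs : 0 < s) (hlam : 0 ≤ lam) :
    MeasureTheory.IntegrableOn
      (fun t : ℝ => t ^ (-(1 / 2) : ℝ) * Real.cos (Real.sqrt (lam * t)) *
        Real.exp (-s * t)) (Set.Ioi 0) ∧
    (∫ t in Set.Ioi (0 : ℝ), t ^ (-(1 / 2) : ℝ) * Real.cos (Real.sqrt (lam * t)) *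
        Real.exp (-s * t)) =
      Real.sqrt (π / s) * Real.exp (-lam / (4 * s)) := by
  open MeasureTheory Set in
  have hbound : IntegrableOn (fun t : ℝ => t ^ (-(1 / 2) : ℝ) * Real.exp (-s * t)) (Ioi 0) := by
    have h := integrableOn_rpow_mul_exp_neg_mul_rpow (p := 1) (s := (-(1/2) : ℝ)) (b := s)
      (by norm_num) one_pos hs
    refine h.congr_fun (fun x _ => ?_) measurableSet_Ioi
    simp only [Real.rpow_one]
  open MeasureTheory Set in
  have hint : IntegrableOn
      (fun t : ℝ => t ^ (-(1 / 2) : ℝ) * Real.cos (Real.sqrt (lam * t)) *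
        Real.exp (-s * t)) (Ioi 0) := by
    refine hbound.mono' ?_ ?_
    · apply Measurable.aestronglyMeasurable
      fun_prop
    · filter_upwards [ae_restrict_mem measurableSet_Ioi] with t ht
      have ht0 : (0 : ℝ) < t := ht
      rw [norm_mul, norm_mul, Real.norm_eq_abs, Real.norm_eq_abs, Real.norm_eq_abs,
        abs_of_nonneg (Real.rpow_nonneg ht0.le _), Real.abs_exp]
      calc t ^ (-(1 / 2) : ℝ) * |Real.cos (Real.sqrt (lam * t))| * Real.exp (-s * t)
          ≤ t ^ (-(1 / 2) : ℝ) * 1 * Real.exp (-s * t) := by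
            gcongr
            exact Real.abs_cos_le_one _
        _ = t ^ (-(1 / 2) : ℝ) * Real.exp (-s * t) := by ring
  refine ⟨hint, ?_⟩
  open MeasureTheory Set in
  have hsubst := integral_comp_rpow_Ioi_of_pos
    (g := fun t : ℝ => t ^ (-(1 / 2) : ℝ) * Real.cos (Real.sqrt (lam * t)) * Real.exp (-s * t))
    (p := 2) zero_lt_two
  open MeasureTheory Set in
  have hLHS : (∫ x in Ioi (0:ℝ), ((2 : ℝ) * x ^ ((2:ℝ) - 1)) •
      ((x ^ (2:ℝ)) ^ (-(1 / 2) : ℝ) * Real.cos (Real.sqrt (lam * x ^ (2:ℝ))) *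
        Real.exp (-s * x ^ (2:ℝ))))
      = ∫ x in Ioi (0:ℝ), 2 * (Real.cos (Real.sqrt lam * x) * Real.exp (-s * x ^ 2)) := by
    refine setIntegral_congr_fun measurableSet_Ioi (fun x hx => ?_)
    have hx0 : (0 : ℝ) < x := hx
    have h2 : x ^ (2:ℝ) = x ^ 2 := by
      rw [← Real.rpow_natCast x 2]; norm_num
    have hinv : (x ^ (2:ℝ)) ^ (-(1 / 2) : ℝ) = x⁻¹ := by
      rw [← Real.rpow_mul hx0.le]
      norm_num
      exact Real.rpow_neg_one x
    have hsq : Real.sqrt (lam * x ^ (2:ℝ)) = Real.sqrt lam * x := by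
      rw [h2, Real.sqrt_mul hlam, Real.sqrt_sq hx0.le]
    rw [hinv, hsq, h2, smul_eq_mul]
    have : (2 : ℝ) * x ^ ((2:ℝ) - 1) = 2 * x := by
      norm_num
    rw [this]
    field_simp
  open MeasureTheory Set in
  have heven := integral_comp_abs
    (f := fun x : ℝ => Real.cos (Real.sqrt lam * x) * Real.exp (-s * x ^ 2))
  open MeasureTheory Set in
  have heven' : (∫ x : ℝ, Real.cos (Real.sqrt lam * x) * Real.exp (-s * x ^ 2))
      = 2 * ∫ x in Ioi (0:ℝ), Real.cos (Real.sqrt lam * x) * Real.exp (-s * x ^ 2) := by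
    rw [← heven]
    congr 1
    ext x
    rw [← abs_of_nonneg (Real.sqrt_nonneg lam) , ← abs_mul, Real.cos_abs, sq_abs,
      abs_of_nonneg (Real.sqrt_nonneg lam)]
  rw [← hsubst, hLHS, MeasureTheory.integral_const_mul, ← heven',
    laplace_aux_complex s lam hs hlam]
end
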